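/- For every u > 0 and every real θ with −μu < θ and θ < Φ(u + θ/μ), ∫_0^∞ u e^{−ux} E(e^{θ(T_x − x/μ)} − 1) dx = (θ²/(μu + θ)²) · [ μu/(Φ(u + θ/μ) − θ) − 1 ]. -/

import Mathlib

open MeasureTheory ProbabilityTheory Filter Set Topology

noncomputable section

/-- The setup of the paper: a driftless Lévy subordinator `Xp` with Lévy measure `ν`
(finite mean `μ`), an independent initial delay `X0` with the stationary delay
distribution, and the associated inverse subordinators. -/
structure LevyCtx (Ω : Type) [MeasureSpace Ω] where
  ν : Measure ℝ
  μ : ℝ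
  Xp : ℝ → Ω → ℝ
  X0 : Ω → ℝ
  prob : IsProbabilityMeasure (ℙ : Measure Ω)
  nu_supp : ν (Set.Iic 0) = 0
  nu_min_fin : (∫⁻ x, ENNReal.ofReal (min 1 x) ∂ν) ≠ ⊤
  mu_pos : 0 < μ
  mu_eq : ∫⁻ x, ENNReal.ofReal x ∂ν = ENNReal.ofReal μ
  Xp_meas : ∀ t, Measurable (Xp t)
  X0_meas : Measurable X0
  Xp_zero : ∀ ω, Xp 0 ω = 0
  Xp_mono : ∀ᵐ ω : Ω, Monotone fun t => Xp t ω
  Xp_rc : ∀ᵐ ω : Ω, ∀ t : ℝ, ContinuousWithinAt (fun s => Xp s ω) (Set.Ici t) t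
  Xp_top : ∀ᵐ ω : Ω, Tendsto (fun t => Xp t ω) atTop atTop
  Xp_laplace : ∀ u : ℝ, 0 ≤ u → ∀ t : ℝ, 0 ≤ t →
    (∫ ω, Real.exp (-(u * Xp t ω))) = Real.exp (-(t * ∫ x, (1 - Real.exp (-(u * x))) ∂ν))
  Xp_stat : ∀ s t : ℝ, 0 ≤ s → s ≤ t →
    Measure.map (fun ω => Xp t ω - Xp s ω) ℙ = Measure.map (Xp (t - s)) ℙ
  Xp_indep : ∀ (n : ℕ) (t : Fin (n + 1) → ℝ), Monotone t → (∀ i, 0 ≤ t i) →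
    iIndepFun
      (fun (i : Fin n) (ω : Ω) => Xp (t i.succ) ω - Xp (t i.castSucc) ω) ℙ
  X0_pos : ∀ᵐ ω : Ω, 0 < X0 ω
  X0_cdf : ∀ x : ℝ, 0 ≤ x →
    (ℙ {ω | X0 ω ≤ x}).toReal = (1 / μ) * ∫ y in (0:ℝ)..x, (ν (Set.Ioi y)).toReal
  X0_indep : IndepFun X0 (fun ω (t : ℝ) => Xp t ω) ℙ

namespace LevyCtx

variable {Ω : Type} [MeasureSpace Ω] (S : LevyCtx Ω)

/-- The Laplace exponent `Φ(u) = ∫ (1 - e^{-ux}) ν(dx)`. -/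
def Phi (u : ℝ) : ℝ := ∫ x, (1 - Real.exp (-(u * x))) ∂S.ν

/-- The inverse (first passage) process of the delayed subordinator `X = X0 + Xp`. -/
def T (x : ℝ) (ω : Ω) : ℝ := sInf {t : ℝ | 0 ≤ t ∧ x < S.X0 ω + S.Xp t ω}

/-- The inverse (first passage) process of the pure subordinator `Xp`. -/
def Tp (x : ℝ) (ω : Ω) : ℝ := sInf {t : ℝ | 0 ≤ t ∧ x < S.Xp t ω}

/-- The overshoot process `Γ_x = X_{T_x} - x`. -/
def Gshoot (x : ℝ) (ω : Ω) : ℝ := S.X0 ω + S.Xp (S.T x ω) ω - x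

end LevyCtx


section Aux
open Real

lemma aux_integral_exp_Ioi {b : ℝ} (hb : 0 < b) (a : ℝ) :
    ∫ x in Ioi a, Real.exp (-(b * x)) = Real.exp (-(b * a)) / b := by
  have h : ∀ x ∈ Ici a, HasDerivAt (fun y => -Real.exp (-(b * y)) / b) (Real.exp (-(b * x))) x := by
    intro x _
    have h1 : HasDerivAt (fun y => -(b * y)) (-b) x := by
      simpa using (hasDerivAt_id x).const_mul (-b)
    have h2 := ((Real.hasDerivAt_exp (-(b * x))).comp x h1).neg.div_const b
    refine h2.congr_deriv ?_
    field_simp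
  have hint : IntegrableOn (fun x => Real.exp (-(b * x))) (Ioi a) := by
    have := exp_neg_integrableOn_Ioi a hb
    simpa [neg_mul] using this
  have htend : Tendsto (fun y => -Real.exp (-(b * y)) / b) atTop (nhds 0) := by
    have h0 : Tendsto (fun y : ℝ => -(b * y)) atTop atBot :=
      tendsto_neg_atBot_iff.mpr (tendsto_id.const_mul_atTop hb)
    have := (Real.tendsto_exp_atBot.comp h0).neg.div_const b
    simpa using this
  have := integral_Ioi_of_hasDerivAt_of_tendsto' h hint htend
  rw [this]; field_simp; ring

lemma aux_lint_exp_Ici {b : ℝ} (hb : 0 < b) (a : ℝ) :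
    ∫⁻ x in Ici a, ENNReal.ofReal (Real.exp (-(b * x)))
      = ENNReal.ofReal (Real.exp (-(b * a)) / b) := by
  rw [← Measure.restrict_congr_set Ioi_ae_eq_Ici, ← aux_integral_exp_Ioi hb a,
    ofReal_integral_eq_lintegral_ofReal]
  · have := exp_neg_integrableOn_Ioi a hb
    simp only [neg_mul] at this; exact this
  · exact Eventually.of_forall fun x => (Real.exp_pos _).le

lemma aux_lint_exp_Ioo {c : ℝ} (hc : c ≠ 0) {T : ℝ} (hT : 0 ≤ T) :
    ∫⁻ t in Ioo 0 T, ENNReal.ofReal (Real.exp (c * t))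
      = ENNReal.ofReal ((Real.exp (c * T) - 1) / c) := by
  rw [Measure.restrict_congr_set Ioo_ae_eq_Ioc]
  have hint : IntegrableOn (fun t => Real.exp (c * t)) (Ioc 0 T) :=
    (Real.continuous_exp.comp (continuous_const.mul continuous_id)).integrableOn_Ioc
  rw [← ofReal_integral_eq_lintegral_ofReal hint
      (Eventually.of_forall fun x => (Real.exp_pos _).le)]
  congr 1
  rw [← intervalIntegral.integral_of_le hT]
  have : ∫ t in (0:ℝ)..T, Real.exp (c * t) = (Real.exp (c * T) - Real.exp (c * 0)) / c := by
    rw [intervalIntegral.integral_comp_mul_left (fun y => Real.exp y) hc]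
    simp [integral_exp, div_eq_inv_mul]
  rw [this]; simp

end Aux

namespace LevyCtx

variable {Ω : Type} [MeasureSpace Ω] (S : LevyCtx Ω)

lemma ae_nu_pos : ∀ᵐ x ∂S.ν, 0 < x := by
  have : S.ν {x | ¬ 0 < x} = 0 := by
    have : {x : ℝ | ¬ 0 < x} = Set.Iic 0 := by ext x; simp
    rw [this]; exact S.nu_supp
  exact this

lemma nu_Ioi_lt_top {y : ℝ} (hy : 0 < y) : S.ν (Set.Ioi y) < ⊤ := by
  by_contra h
  push_neg at h
  have htop : S.ν (Set.Ioi y) = ⊤ := top_le_iff.mp h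
  have hmin : (0:ℝ) < min 1 y := lt_min one_pos hy
  have hle : ENNReal.ofReal (min 1 y) * S.ν (Set.Ioi y)
      ≤ ∫⁻ x, ENNReal.ofReal (min 1 x) ∂S.ν := by
    calc ENNReal.ofReal (min 1 y) * S.ν (Set.Ioi y)
        = ∫⁻ _ in Set.Ioi y, ENNReal.ofReal (min 1 y) ∂S.ν := by
          rw [setLIntegral_const, mul_comm]
      _ ≤ ∫⁻ x in Set.Ioi y, ENNReal.ofReal (min 1 x) ∂S.ν := by
          refine setLIntegral_mono (by fun_prop) fun x hx => ?_
          exact ENNReal.ofReal_le_ofReal (min_le_min le_rfl (le_of_lt hx))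
      _ ≤ ∫⁻ x, ENNReal.ofReal (min 1 x) ∂S.ν := setLIntegral_le_lintegral _ _
  rw [htop, ENNReal.mul_top (by simpa using hmin)] at hle
  exact S.nu_min_fin (top_le_iff.mp hle)

lemma integrable_one_sub_exp {β : ℝ} (hβ : 0 ≤ β) :
    Integrable (fun x => 1 - Real.exp (-(β * x))) S.ν := by
  have hmeas : AEStronglyMeasurable (fun x : ℝ => 1 - Real.exp (-(β * x))) S.ν :=
    (Continuous.sub continuous_const (Real.continuous_exp.comp
      (continuous_const.mul continuous_id).neg)).aestronglyMeasurable
  have hmin_int : Integrable (fun x : ℝ => min 1 x) S.ν := by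
    refine ⟨(continuous_const.min continuous_id).aestronglyMeasurable, ?_⟩
    rw [hasFiniteIntegral_iff_ofReal ?_]
    · exact lt_of_le_of_ne le_top S.nu_min_fin
    · filter_upwards [S.ae_nu_pos] with x hx
      exact le_min zero_le_one hx.le
  refine (hmin_int.const_mul (max 1 β)).mono' hmeas ?_
  filter_upwards [S.ae_nu_pos] with x hx
  have h1 : Real.exp (-(β * x)) ≤ 1 := by
    apply Real.exp_le_one_iff.mpr; nlinarith
  have h2 : 1 - (β * x) ≤ Real.exp (-(β * x)) := by
    have := Real.add_one_le_exp (-(β * x)); linarith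
  have h3 : 0 ≤ 1 - Real.exp (-(β * x)) := by linarith
  rw [Real.norm_eq_abs, abs_of_nonneg h3]
  rcases le_total x 1 with hx1 | hx1
  · have : min 1 x = x := min_eq_right hx1
    rw [this]
    have : 1 - Real.exp (-(β * x)) ≤ β * x := by linarith
    nlinarith [le_max_right 1 β, le_max_left 1 β]
  · have : min 1 x = 1 := min_eq_left hx1
    rw [this]
    have hE : Real.exp (-(β * x)) ≥ 0 := (Real.exp_pos _).le
    nlinarith [le_max_left 1 β]

lemma Phi_nonneg {β : ℝ} (hβ : 0 ≤ β) : 0 ≤ S.Phi β := by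
  refine integral_nonneg_of_ae ?_
  filter_upwards [S.ae_nu_pos] with x hx
  have : Real.exp (-(β * x)) ≤ 1 := Real.exp_le_one_iff.mpr (by nlinarith)
  show (0:ℝ) ≤ 1 - Real.exp (-(β * x))
  linarith

lemma ofReal_Phi {β : ℝ} (hβ : 0 ≤ β) :
    ENNReal.ofReal (S.Phi β) = ∫⁻ x, ENNReal.ofReal (1 - Real.exp (-(β * x))) ∂S.ν := by
  refine ofReal_integral_eq_lintegral_ofReal (S.integrable_one_sub_exp hβ) ?_
  filter_upwards [S.ae_nu_pos] with x hx
  have : Real.exp (-(β * x)) ≤ 1 := Real.exp_le_one_iff.mpr (by nlinarith)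
  show (0:ℝ) ≤ 1 - Real.exp (-(β * x))
  linarith

end LevyCtx


namespace LevyCtx

variable {Ω : Type} [MeasureSpace Ω] (S : LevyCtx Ω)

lemma lint_nu_Ioi : ∫⁻ y in Set.Ioi (0:ℝ), S.ν (Set.Ioi y) = ENNReal.ofReal S.μ := by
  have h := lintegral_eq_lintegral_meas_lt (f := fun x : ℝ => x) S.ν
    (by filter_upwards [S.ae_nu_pos] with x hx; exact hx.le) aemeasurable_id
  rw [S.mu_eq] at h
  exact h.symm

/-- A jointly measurable version of the process (agrees with `Xp` for a.e. `ω`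
simultaneously for all `t ≥ 0`). -/
def Ybar (p : ℝ × Ω) : ℝ :=
  (⨅ n : ℕ, ENNReal.ofReal (S.Xp ((⌈p.1 * 2 ^ n⌉ : ℤ) / 2 ^ n) p.2)).toReal

lemma Ybar_meas : Measurable S.Ybar := by
  apply Measurable.ennreal_toReal
  refine Measurable.iInf fun n => ?_
  have hg : Measurable (fun q : Ω × ℤ => S.Xp ((q.2 : ℝ) / 2 ^ n) q.1) :=
    measurable_from_prod_countable_left (f := fun q : Ω × ℤ => S.Xp ((q.2 : ℝ) / 2 ^ n) q.1)
      (fun k => S.Xp_meas ((k : ℝ) / 2 ^ n))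
  have hp : Measurable fun p : ℝ × Ω => (p.2, (⌈p.1 * 2 ^ n⌉ : ℤ)) :=
    measurable_snd.prodMk ((measurable_fst.mul_const _).ceil)
  exact (hg.comp hp).ennreal_ofReal

lemma Ybar_ae : ∀ᵐ ω : Ω, ∀ t : ℝ, 0 ≤ t → S.Ybar (t, ω) = S.Xp t ω := by
  filter_upwards [S.Xp_mono, S.Xp_rc] with ω hmono hrc
  intro t ht
  set r : ℕ → ℝ := fun n => ((⌈t * 2 ^ n⌉ : ℤ) / 2 ^ n : ℝ) with hr
  have hrge : ∀ n, t ≤ r n := by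
    intro n
    rw [hr, le_div_iff₀ (by positivity)]
    exact_mod_cast Int.le_ceil _
  have hrlt : ∀ n, r n ≤ t + (1/2) ^ n := by
    intro n
    rw [hr, div_le_iff₀ (by positivity)]
    have := (Int.ceil_lt_add_one (t * 2 ^ n)).le
    have h2 : ((1:ℝ)/2) ^ n * 2 ^ n = 1 := by
      rw [div_pow, one_pow]; field_simp
    calc ((⌈t * 2 ^ n⌉ : ℤ) : ℝ) ≤ t * 2 ^ n + 1 := this
      _ = (t + (1/2)^n) * 2 ^ n := by rw [add_mul, h2]
  have hrt : Filter.Tendsto r Filter.atTop (nhdsWithin t (Set.Ici t)) := by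
    rw [tendsto_nhdsWithin_iff]
    constructor
    · have h1 : Filter.Tendsto (fun n : ℕ => t + (1/2:ℝ) ^ n) Filter.atTop (nhds (t + 0)) :=
        tendsto_const_nhds.add (tendsto_pow_atTop_nhds_zero_of_lt_one (by norm_num) (by norm_num))
      rw [add_zero] at h1
      exact tendsto_of_tendsto_of_tendsto_of_le_of_le tendsto_const_nhds h1 hrge hrlt
    · exact Filter.Eventually.of_forall fun n => hrge n
  have hlim : Filter.Tendsto (fun n => S.Xp (r n) ω) Filter.atTop (nhds (S.Xp t ω)) :=
    (hrc t).tendsto.comp hrt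
  have hnn : 0 ≤ S.Xp t ω := by
    simpa [S.Xp_zero ω] using hmono ht
  have hlim2 : Filter.Tendsto (fun n => ENNReal.ofReal (S.Xp (r n) ω)) Filter.atTop
      (nhds (ENNReal.ofReal (S.Xp t ω))) :=
    (ENNReal.continuous_ofReal.tendsto _).comp hlim
  have hle : ∀ n, ENNReal.ofReal (S.Xp t ω) ≤ ENNReal.ofReal (S.Xp (r n) ω) :=
    fun n => ENNReal.ofReal_le_ofReal (hmono (hrge n))
  have : (⨅ n : ℕ, ENNReal.ofReal (S.Xp (r n) ω)) = ENNReal.ofReal (S.Xp t ω) := by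
    exact le_antisymm (hlim2.liminf_eq ▸ iInf_le_liminf) (le_iInf hle)
  rw [Ybar, this, ENNReal.toReal_ofReal hnn]

lemma Xp_nonneg : ∀ᵐ ω : Ω, ∀ t : ℝ, 0 ≤ t → 0 ≤ S.Xp t ω := by
  filter_upwards [S.Xp_mono] with ω hmono t ht
  simpa [S.Xp_zero ω] using hmono ht

end LevyCtx


section Aux2
open Real Set

lemma aux_lint_tail {β : ℝ} (hβ : 0 < β) {u : ℝ} (hu : 0 ≤ u) {c : ℝ} (hc : 0 < c) :
    (∫⁻ x in Set.Ioi (0:ℝ), (if c ≤ x then ENNReal.ofReal (u * Real.exp (-(β * x))) else 0))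
      = ENNReal.ofReal (u / β * Real.exp (-(β * c))) := by
  have h1 : (fun x : ℝ => if c ≤ x then ENNReal.ofReal (u * Real.exp (-(β * x))) else 0)
      = (Ici c).indicator (fun x => ENNReal.ofReal (u * Real.exp (-(β * x)))) := by
    ext x; simp [Set.indicator_apply, Set.mem_Ici]
  rw [h1, lintegral_indicator measurableSet_Ici, Measure.restrict_restrict measurableSet_Ici]
  have h2 : Ici c ∩ Ioi (0:ℝ) = Ici c := by
    apply inter_eq_left.mpr; intro x hx; exact lt_of_lt_of_le hc hx
  rw [h2]
  have h3 : ∀ x : ℝ, ENNReal.ofReal (u * Real.exp (-(β * x)))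
      = ENNReal.ofReal u * ENNReal.ofReal (Real.exp (-(β * x))) := fun x =>
    ENNReal.ofReal_mul hu
  simp_rw [h3]
  rw [lintegral_const_mul _ (by fun_prop), aux_lint_exp_Ici hβ c, ← ENNReal.ofReal_mul hu]
  ring_nf

lemma aux_lint_cut {β : ℝ} (hβ : 0 < β) {z : ℝ} (hz : 0 < z) :
    (∫⁻ y in Set.Ioi (0:ℝ), (if y < z then ENNReal.ofReal (Real.exp (-(β * y))) else 0))
      = ENNReal.ofReal ((1 - Real.exp (-(β * z))) / β) := by
  have h1 : (fun y : ℝ => if y < z then ENNReal.ofReal (Real.exp (-(β * y))) else 0)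
      = (Iio z).indicator (fun y => ENNReal.ofReal (Real.exp (-(β * y)))) := by
    ext y; simp [Set.indicator_apply, Set.mem_Iio]
  rw [h1, lintegral_indicator measurableSet_Iio, Measure.restrict_restrict measurableSet_Iio]
  have h2 : Iio z ∩ Ioi (0:ℝ) = Ioo 0 z := by
    ext y; simp [Set.mem_Ioo, and_comm]
  rw [h2]
  have h3 : ∀ y : ℝ, Real.exp (-(β * y)) = Real.exp (-β * y) := by intro y; ring_nf
  simp_rw [h3]
  rw [aux_lint_exp_Ioo (neg_ne_zero.mpr hβ.ne') hz.le]
  congr 1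
  rw [neg_mul]
  ring

end Aux2

namespace LevyCtx

variable {Ω : Type} [MeasureSpace Ω] (S : LevyCtx Ω)

lemma nu_sigmaFinite : SigmaFinite S.ν := by
  refine Measure.sigmaFinite_of_countable
    (S := Set.range (fun n : ℕ => Set.Iic 0 ∪ Set.Ioi (1/(n+1) : ℝ)))
    (Set.countable_range _) ?_ ?_
  · rintro s ⟨n, rfl⟩
    refine lt_of_le_of_lt (measure_union_le _ _) ?_
    rw [S.nu_supp, zero_add]
    exact S.nu_Ioi_lt_top (by positivity)
  · rw [Set.sUnion_range]
    ext x; simp only [Set.mem_iUnion, Set.mem_univ, iff_true, Set.mem_union]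
    rcases le_or_gt x 0 with h | h
    · exact ⟨0, Or.inl h⟩
    · obtain ⟨n, hn⟩ := exists_nat_one_div_lt h
      exact ⟨n, Or.inr hn⟩

lemma cdf_lint {x : ℝ} (hx : 0 < x) :
    (ℙ {ω : Ω | S.X0 ω ≤ x})
      = (ENNReal.ofReal S.μ)⁻¹ * ∫⁻ y in Set.Ioc 0 x, S.ν (Set.Ioi y) := by
  haveI := S.prob
  have hνmeas : Measurable (fun y : ℝ => S.ν (Set.Ioi y)) :=
    Antitone.measurable (fun s t hst => measure_mono (fun z hz => lt_of_le_of_lt hst hz))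
  have hfin : (∫⁻ y in Set.Ioc 0 x, S.ν (Set.Ioi y)) ≠ ⊤ := by
    have hle : (∫⁻ y in Set.Ioc 0 x, S.ν (Set.Ioi y))
        ≤ ∫⁻ y in Set.Ioi 0, S.ν (Set.Ioi y) := lintegral_mono_set Set.Ioc_subset_Ioi_self
    rw [S.lint_nu_Ioi] at hle
    exact ne_top_of_le_ne_top ENNReal.ofReal_ne_top hle
  have hae : ∀ᵐ y ∂(volume.restrict (Set.Ioc 0 x)), S.ν (Set.Ioi y) < ⊤ := by
    filter_upwards [ae_restrict_mem measurableSet_Ioc] with y hy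
    exact S.nu_Ioi_lt_top hy.1
  have hInt : ∫ y in Set.Ioc 0 x, (S.ν (Set.Ioi y)).toReal
      = (∫⁻ y in Set.Ioc 0 x, S.ν (Set.Ioi y)).toReal :=
    integral_toReal hνmeas.aemeasurable.restrict hae
  have hcdf := S.X0_cdf x hx.le
  rw [intervalIntegral.integral_of_le hx.le, hInt] at hcdf
  have hne1 : ℙ {ω : Ω | S.X0 ω ≤ x} ≠ ⊤ := measure_ne_top _ _
  have hne2 : (ENNReal.ofReal S.μ)⁻¹ * (∫⁻ y in Set.Ioc 0 x, S.ν (Set.Ioi y)) ≠ ⊤ :=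
    ENNReal.mul_ne_top (ENNReal.inv_ne_top.mpr (by simp [S.mu_pos])) hfin
  rw [← ENNReal.toReal_eq_toReal_iff' hne1 hne2]
  rw [hcdf, ENNReal.toReal_mul, ENNReal.toReal_inv, ENNReal.toReal_ofReal S.mu_pos.le]
  ring

lemma lap_X0_lint {β : ℝ} (hβ : 0 < β) :
    ∫⁻ ω, ENNReal.ofReal (Real.exp (-(β * S.X0 ω)))
      = (ENNReal.ofReal S.μ)⁻¹ * (ENNReal.ofReal β)⁻¹ * ENNReal.ofReal (S.Phi β) := by
  haveI := S.prob
  haveI := S.nu_sigmaFinite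
  have hμ0 : (ENNReal.ofReal S.μ) ≠ 0 := by simp [S.mu_pos]
  -- step 1: represent exp(-βX0) as a tail integral
  have step1 : ∀ᵐ ω : Ω, ENNReal.ofReal (Real.exp (-(β * S.X0 ω)))
      = ∫⁻ x in Set.Ioi (0:ℝ),
          (if S.X0 ω ≤ x then ENNReal.ofReal (β * Real.exp (-(β * x))) else 0) := by
    filter_upwards [S.X0_pos] with ω hω
    rw [aux_lint_tail hβ hβ.le hω]
    congr 1
    field_simp
  rw [lintegral_congr_ae step1]
  -- step 2: swap ω and x
  have hmeas_ind : Measurable (fun p : Ω × ℝ =>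
      if S.X0 p.1 ≤ p.2 then ENNReal.ofReal (β * Real.exp (-(β * p.2))) else 0) := by
    refine Measurable.ite ?_ (by fun_prop) measurable_const
    exact measurableSet_le (S.X0_meas.comp measurable_fst) measurable_snd
  rw [lintegral_lintegral_swap hmeas_ind.aemeasurable]
  -- step 3: inner ω-integral is the CDF
  have step3 : ∀ x ∈ Set.Ioi (0:ℝ),
      (∫⁻ ω, (if S.X0 ω ≤ x then ENNReal.ofReal (β * Real.exp (-(β * x))) else 0))
        = ENNReal.ofReal (β * Real.exp (-(β * x))) *
            ((ENNReal.ofReal S.μ)⁻¹ * ∫⁻ y in Set.Ioc 0 x, S.ν (Set.Ioi y)) := by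
    intro x hx
    rw [← S.cdf_lint hx]
    have : (fun ω => if S.X0 ω ≤ x then ENNReal.ofReal (β * Real.exp (-(β * x))) else 0)
        = ({ω : Ω | S.X0 ω ≤ x}).indicator
            (fun _ => ENNReal.ofReal (β * Real.exp (-(β * x)))) := by
      ext ω; by_cases h : S.X0 ω ≤ x <;>
        simp [Set.indicator_apply, Set.mem_setOf_eq, h]
    have hsm : MeasurableSet {ω : Ω | S.X0 ω ≤ x} := S.X0_meas measurableSet_Iic
    rw [this, lintegral_indicator_const hsm]
  rw [setLIntegral_congr_fun measurableSet_Ioi step3]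
  -- pull out (ofReal μ)⁻¹
  have hrearr : ∀ x ∈ Set.Ioi (0:ℝ),
      ENNReal.ofReal (β * Real.exp (-(β * x))) *
          ((ENNReal.ofReal S.μ)⁻¹ * ∫⁻ y in Set.Ioc 0 x, S.ν (Set.Ioi y))
        = (ENNReal.ofReal S.μ)⁻¹ *
            (ENNReal.ofReal (β * Real.exp (-(β * x))) * ∫⁻ y in Set.Ioc 0 x, S.ν (Set.Ioi y)) :=
    fun x _ => mul_left_comm _ _ _
  rw [setLIntegral_congr_fun measurableSet_Ioi hrearr,
    lintegral_const_mul' _ _ (ENNReal.inv_ne_top.mpr (by simp [S.mu_pos]))]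
  rw [mul_assoc]
  congr 1
  -- now compute ∫⁻ x in Ioi 0, W x * ∫⁻ y in Ioc 0 x, ν (Ioi y)
  have hνmeas : Measurable (fun y : ℝ => S.ν (Set.Ioi y)) :=
    Antitone.measurable (fun s t hst => measure_mono (fun z hz => lt_of_le_of_lt hst hz))
  have hL : ∀ x ∈ Set.Ioi (0:ℝ),
      ENNReal.ofReal (β * Real.exp (-(β * x))) * (∫⁻ y in Set.Ioc 0 x, S.ν (Set.Ioi y))
      = ∫⁻ y in Set.Ioi 0,
          (if y ≤ x then ENNReal.ofReal (β * Real.exp (-(β * x))) * S.ν (Set.Ioi y) else 0) := by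
    intro x _
    have h0 : (∫⁻ y in Set.Ioc 0 x, S.ν (Set.Ioi y))
        = ∫⁻ y in Set.Ioi 0, (if y ≤ x then S.ν (Set.Ioi y) else 0) := by
      have h1 : (fun y : ℝ => if y ≤ x then S.ν (Set.Ioi y) else 0)
          = (Set.Iic x).indicator (fun y => S.ν (Set.Ioi y)) := by
        ext y; simp [Set.indicator_apply, Set.mem_Iic]
      rw [h1, lintegral_indicator measurableSet_Iic,
        Measure.restrict_restrict measurableSet_Iic]
      congr 2
      ext y; simp [Set.mem_Ioc, Set.mem_Iic]; tauto
    rw [h0, ← lintegral_const_mul _ (by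
      exact Measurable.ite (measurableSet_le measurable_id measurable_const) hνmeas
        measurable_const)]
    congr 1; ext y
    by_cases h : y ≤ x <;> simp [h]
  rw [setLIntegral_congr_fun measurableSet_Ioi hL]
  -- swap x and y
  have hswapA : Measurable (fun p : ℝ × ℝ =>
      if p.2 ≤ p.1 then ENNReal.ofReal (β * Real.exp (-(β * p.1))) * S.ν (Set.Ioi p.2) else 0) := by
    refine Measurable.ite (measurableSet_le measurable_snd measurable_fst) ?_ measurable_const
    exact Measurable.mul (by fun_prop) (hνmeas.comp measurable_snd)
  rw [lintegral_lintegral_swap hswapA.aemeasurable]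
  -- inner x-integral
  have hinner : ∀ y ∈ Set.Ioi (0:ℝ),
      (∫⁻ x in Set.Ioi (0:ℝ),
          (if y ≤ x then ENNReal.ofReal (β * Real.exp (-(β * x))) * S.ν (Set.Ioi y) else 0))
        = ENNReal.ofReal (Real.exp (-(β * y))) * S.ν (Set.Ioi y) := by
    intro y hy
    have h1 : (fun x : ℝ =>
        if y ≤ x then ENNReal.ofReal (β * Real.exp (-(β * x))) * S.ν (Set.Ioi y) else 0)
        = fun x => (if y ≤ x then ENNReal.ofReal (β * Real.exp (-(β * x))) else 0)
            * S.ν (Set.Ioi y) := by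
      ext x; by_cases h : y ≤ x <;> simp [h]
    rw [h1, lintegral_mul_const' _ _ (S.nu_Ioi_lt_top hy).ne, aux_lint_tail hβ hβ.le hy,
      div_self hβ.ne', one_mul]
  rw [setLIntegral_congr_fun measurableSet_Ioi hinner]
  -- express ν (Ioi y) as an integral over ν and swap again
  have hrep : ∀ y ∈ Set.Ioi (0:ℝ),
      ENNReal.ofReal (Real.exp (-(β * y))) * S.ν (Set.Ioi y)
        = ∫⁻ z, (if y < z then ENNReal.ofReal (Real.exp (-(β * y))) else 0) ∂S.ν := by
    intro y _
    have h1 : (fun z : ℝ => if y < z then ENNReal.ofReal (Real.exp (-(β * y))) else 0)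
        = (Set.Ioi y).indicator (fun _ => ENNReal.ofReal (Real.exp (-(β * y)))) := by
      ext z; simp [Set.indicator_apply, Set.mem_Ioi]
    rw [h1, lintegral_indicator_const measurableSet_Ioi]
  rw [setLIntegral_congr_fun measurableSet_Ioi hrep]
  have hswapB : Measurable (fun p : ℝ × ℝ =>
      if p.1 < p.2 then ENNReal.ofReal (Real.exp (-(β * p.1))) else 0) := by
    refine Measurable.ite (measurableSet_lt measurable_fst measurable_snd) ?_ measurable_const
    fun_prop
  rw [lintegral_lintegral_swap hswapB.aemeasurable]
  -- inner y-integral via aux_lint_cut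
  have hcut : ∀ᵐ z ∂S.ν,
      (∫⁻ y in Set.Ioi (0:ℝ), (if y < z then ENNReal.ofReal (Real.exp (-(β * y))) else 0))
        = (ENNReal.ofReal β)⁻¹ * ENNReal.ofReal (1 - Real.exp (-(β * z))) := by
    filter_upwards [S.ae_nu_pos] with z hz
    rw [aux_lint_cut hβ hz, ENNReal.ofReal_div_of_pos hβ, div_eq_mul_inv, mul_comm]
  rw [lintegral_congr_ae hcut,
    lintegral_const_mul' _ _ (ENNReal.inv_ne_top.mpr (by simp [hβ])), ← S.ofReal_Phi hβ.le]

end LevyCtx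


namespace LevyCtx

variable {Ω : Type} [MeasureSpace Ω] (S : LevyCtx Ω)

lemma lap_X0 {β : ℝ} (hβ : 0 < β) :
    ∫ ω, Real.exp (-(β * S.X0 ω)) = S.Phi β / (S.μ * β) := by
  haveI := S.prob
  rw [integral_eq_lintegral_of_nonneg_ae
    (Filter.Eventually.of_forall fun ω => (Real.exp_pos _).le)
    (by have := S.X0_meas; fun_prop : Measurable fun ω => Real.exp (-(β * S.X0 ω))).aestronglyMeasurable,
    S.lap_X0_lint hβ]
  rw [ENNReal.toReal_mul, ENNReal.toReal_mul, ENNReal.toReal_inv, ENNReal.toReal_inv,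
    ENNReal.toReal_ofReal S.mu_pos.le, ENNReal.toReal_ofReal hβ.le,
    ENNReal.toReal_ofReal (S.Phi_nonneg hβ.le)]
  field_simp

lemma lap_X {β : ℝ} (hβ : 0 < β) {t : ℝ} (ht : 0 ≤ t) :
    ∫ ω, Real.exp (-(β * (S.X0 ω + S.Xp t ω)))
      = S.Phi β / (S.μ * β) * Real.exp (-(t * S.Phi β)) := by
  haveI := S.prob
  have hI : IndepFun (fun ω => Real.exp (-(β * S.X0 ω)))
      (fun ω => Real.exp (-(β * S.Xp t ω))) ℙ := by
    have hφ : Measurable (fun a : ℝ => Real.exp (-(β * a))) := by fun_prop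
    have hψ : Measurable (fun f : ℝ → ℝ => Real.exp (-(β * f t))) :=
      by fun_prop
    exact S.X0_indep.comp hφ hψ
  have heq : (fun ω => Real.exp (-(β * (S.X0 ω + S.Xp t ω))))
      = fun ω => Real.exp (-(β * S.X0 ω)) * Real.exp (-(β * S.Xp t ω)) := by
    ext ω; rw [← Real.exp_add]; ring_nf
  have hmul : ∫ ω, Real.exp (-(β * S.X0 ω)) * Real.exp (-(β * S.Xp t ω))
      = (∫ ω, Real.exp (-(β * S.X0 ω))) * ∫ ω, Real.exp (-(β * S.Xp t ω)) :=
    hI.integral_fun_mul_eq_mul_integral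
      (by have := S.X0_meas; fun_prop : Measurable fun ω => Real.exp (-(β * S.X0 ω))).aestronglyMeasurable
      (by have := S.Xp_meas t; fun_prop : Measurable fun ω => Real.exp (-(β * S.Xp t ω))).aestronglyMeasurable
  rw [heq, hmul, S.lap_X0 hβ]
  congr 1
  exact S.Xp_laplace β hβ.le t ht

lemma lap_X_lint {β : ℝ} (hβ : 0 < β) {t : ℝ} (ht : 0 ≤ t) :
    ∫⁻ ω, ENNReal.ofReal (Real.exp (-(β * (S.X0 ω + S.Xp t ω))))
      = ENNReal.ofReal (S.Phi β / (S.μ * β) * Real.exp (-(t * S.Phi β))) := by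
  haveI := S.prob
  rw [← S.lap_X hβ ht]
  refine (ofReal_integral_eq_lintegral_ofReal ?_
    (Filter.Eventually.of_forall fun ω => (Real.exp_pos _).le)).symm
  have hmeas : AEStronglyMeasurable (fun ω => Real.exp (-(β * (S.X0 ω + S.Xp t ω)))) ℙ :=
    (Real.measurable_exp.comp ((S.X0_meas.add (S.Xp_meas t)).const_mul β).neg).aestronglyMeasurable
  refine Integrable.mono' (integrable_const 1) hmeas ?_
  filter_upwards [S.X0_pos, S.Xp_nonneg] with ω h0 h1
  rw [Real.norm_eq_abs, abs_of_nonneg (Real.exp_pos _).le]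
  refine Real.exp_le_one_iff.mpr ?_
  have := h1 t ht
  nlinarith

end LevyCtx


namespace LevyCtx

variable {Ω : Type} [MeasureSpace Ω] (S : LevyCtx Ω)

lemma T_pathwise : ∀ᵐ ω : Ω, ∀ x : ℝ, 0 < x →
    0 ≤ S.T x ω ∧
    (∀ t : ℝ, 0 < t → t < S.T x ω → S.X0 ω + S.Xp t ω ≤ x) ∧
    (∀ t : ℝ, 0 < t → S.X0 ω + S.Xp t ω ≤ x → t ≤ S.T x ω) := by
  filter_upwards [S.Xp_mono, S.Xp_top] with ω hmono htop
  intro x hx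
  set A : Set ℝ := {t : ℝ | 0 ≤ t ∧ x < S.X0 ω + S.Xp t ω} with hA
  have hAne : A.Nonempty := by
    have h1 : ∀ᶠ t in Filter.atTop, x - S.X0 ω + 1 ≤ S.Xp t ω :=
      htop.eventually_ge_atTop _
    have h2 : ∀ᶠ t : ℝ in Filter.atTop, (0:ℝ) ≤ t := Filter.eventually_ge_atTop 0
    obtain ⟨t, ht1, ht2⟩ := (h1.and h2).exists
    exact ⟨t, ht2, by linarith⟩
  have hAbdd : BddBelow A := ⟨0, fun a ha => ha.1⟩
  have hT0 : 0 ≤ S.T x ω := le_csInf hAne fun a ha => ha.1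
  refine ⟨hT0, ?_, ?_⟩
  · intro t ht htT
    by_contra hgt
    push_neg at hgt
    have : t ∈ A := ⟨ht.le, hgt⟩
    exact absurd (csInf_le hAbdd this) (not_le.mpr htT)
  · intro t ht hle
    refine le_csInf hAne fun a ha => ?_
    by_contra hlt
    push_neg at hlt
    have := hmono hlt.le
    simp only at this
    have : x < S.X0 ω + S.Xp t ω := lt_of_lt_of_le ha.2 (by linarith)
    linarith

lemma inner_lint {θ : ℝ} (hθ : θ ≠ 0) : ∀ᵐ ω : Ω, ∀ x : ℝ, 0 < x →
    (∫⁻ t in Set.Ioi (0:ℝ),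
        (if S.X0 ω + S.Ybar (t, ω) ≤ x then ENNReal.ofReal (Real.exp (θ * t)) else 0))
      = ENNReal.ofReal ((Real.exp (θ * S.T x ω) - 1) / θ) := by
  filter_upwards [S.T_pathwise, S.Ybar_ae, S.X0_pos] with ω hT hY hX0
  intro x hx
  obtain ⟨hT0, hlow, hup⟩ := hT x hx
  set Tx := S.T x ω
  have hae : ∀ᵐ t ∂(volume.restrict (Set.Ioi (0:ℝ))),
      (if S.X0 ω + S.Ybar (t, ω) ≤ x then ENNReal.ofReal (Real.exp (θ * t)) else 0)
        = (Set.Ioo 0 Tx).indicator (fun t => ENNReal.ofReal (Real.exp (θ * t))) t := by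
    have hne : ∀ᵐ t ∂(volume.restrict (Set.Ioi (0:ℝ))), t ≠ Tx := by
      refine ae_restrict_of_ae ?_
      have : volume ({Tx} : Set ℝ) = 0 := measure_singleton Tx
      rw [ae_iff]
      simpa using this
    filter_upwards [hne, ae_restrict_mem measurableSet_Ioi] with t htne htpos
    rw [hY t (le_of_lt htpos)]
    rcases lt_trichotomy t Tx with h | h | h
    · have hcond : S.X0 ω + S.Xp t ω ≤ x := hlow t htpos h
      rw [if_pos hcond, Set.indicator_of_mem (Set.mem_Ioo.mpr ⟨htpos, h⟩)]
    · exact absurd h htne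
    · have hcond : ¬ S.X0 ω + S.Xp t ω ≤ x := fun hc =>
        absurd (hup t htpos hc) (not_le.mpr h)
      rw [if_neg hcond, Set.indicator_of_notMem (fun hmem => absurd hmem.2 (not_lt.mpr h.le))]
  rw [lintegral_congr_ae hae, lintegral_indicator measurableSet_Ioo,
    Measure.restrict_restrict measurableSet_Ioo,
    Set.inter_eq_left.mpr (fun t ht => ht.1), aux_lint_exp_Ioo hθ hT0]

end LevyCtx


namespace LevyCtx

variable {Ω : Type} [MeasureSpace Ω] (S : LevyCtx Ω)

lemma J_value {u θ : ℝ} (hu : 0 < u) (hα : 0 < u + θ / S.μ)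
    (hθu : θ < S.Phi (u + θ / S.μ)) :
    (∫⁻ x in Set.Ioi (0:ℝ), ENNReal.ofReal (u * Real.exp (-((u + θ / S.μ) * x))) *
        ∫⁻ ω, ∫⁻ t in Set.Ioi (0:ℝ),
          (if S.X0 ω + S.Ybar (t, ω) ≤ x then ENNReal.ofReal (Real.exp (θ * t)) else 0))
      = ENNReal.ofReal (u / (u + θ / S.μ) * (S.Phi (u + θ / S.μ) / (S.μ * (u + θ / S.μ)))
          * (1 / (S.Phi (u + θ / S.μ) - θ))) := by
  haveI := S.prob
  set α := u + θ / S.μ with hαdef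
  -- measurability of the triple integrand
  have hkt : Measurable (fun q : (ℝ × Ω) × ℝ =>
      if S.X0 q.1.2 + S.Ybar (q.2, q.1.2) ≤ q.1.1
        then ENNReal.ofReal (Real.exp (θ * q.2)) else 0) := by
    refine Measurable.ite ?_ (by fun_prop) measurable_const
    refine measurableSet_le ?_ (measurable_fst.comp measurable_fst)
    exact ((S.X0_meas.comp (measurable_snd.comp measurable_fst)).add
      (S.Ybar_meas.comp (measurable_snd.prodMk (measurable_snd.comp measurable_fst))))
  have hG : Measurable (fun p : ℝ × Ω => ∫⁻ t in Set.Ioi (0:ℝ),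
      (if S.X0 p.2 + S.Ybar (t, p.2) ≤ p.1 then ENNReal.ofReal (Real.exp (θ * t)) else 0)) :=
    Measurable.lintegral_prod_right' (f := fun q : (ℝ × Ω) × ℝ =>
      if S.X0 q.1.2 + S.Ybar (q.2, q.1.2) ≤ q.1.1
        then ENNReal.ofReal (Real.exp (θ * q.2)) else 0) hkt
  -- step 0: pull the weight inside the ω-integral
  have step0 : ∀ x ∈ Set.Ioi (0:ℝ),
      (ENNReal.ofReal (u * Real.exp (-(α * x))) *
        ∫⁻ ω, ∫⁻ t in Set.Ioi (0:ℝ),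
          (if S.X0 ω + S.Ybar (t, ω) ≤ x then ENNReal.ofReal (Real.exp (θ * t)) else 0))
      = ∫⁻ ω, ENNReal.ofReal (u * Real.exp (-(α * x))) *
          ∫⁻ t in Set.Ioi (0:ℝ),
            (if S.X0 ω + S.Ybar (t, ω) ≤ x then ENNReal.ofReal (Real.exp (θ * t)) else 0) := by
    intro x _
    rw [lintegral_const_mul]
    exact hG.comp (measurable_const.prodMk measurable_id)
  rw [setLIntegral_congr_fun measurableSet_Ioi step0]
  -- swap 1 : x ↔ ω
  have hswap1 : Measurable (fun p : ℝ × Ω =>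
      ENNReal.ofReal (u * Real.exp (-(α * p.1))) *
        ∫⁻ t in Set.Ioi (0:ℝ),
          (if S.X0 p.2 + S.Ybar (t, p.2) ≤ p.1 then ENNReal.ofReal (Real.exp (θ * t)) else 0)) :=
    Measurable.mul (by fun_prop) hG
  rw [lintegral_lintegral_swap hswap1.aemeasurable]
  -- step 2 : per ω, swap x ↔ t and compute the inner x-integral a.e.
  have step2 : ∀ ω : Ω,
      (∫⁻ x in Set.Ioi (0:ℝ), ENNReal.ofReal (u * Real.exp (-(α * x))) *
        ∫⁻ t in Set.Ioi (0:ℝ),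
          (if S.X0 ω + S.Ybar (t, ω) ≤ x then ENNReal.ofReal (Real.exp (θ * t)) else 0))
      = ∫⁻ t in Set.Ioi (0:ℝ), ∫⁻ x in Set.Ioi (0:ℝ),
          ENNReal.ofReal (u * Real.exp (-(α * x))) *
          (if S.X0 ω + S.Ybar (t, ω) ≤ x then ENNReal.ofReal (Real.exp (θ * t)) else 0) := by
    intro ω
    have hmeas_t : ∀ x : ℝ, Measurable (fun t : ℝ =>
        if S.X0 ω + S.Ybar (t, ω) ≤ x then ENNReal.ofReal (Real.exp (θ * t)) else 0) := by
      intro x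
      exact hkt.comp ((measurable_const.prodMk measurable_const).prodMk measurable_id
        : Measurable fun t : ℝ => ((x, ω), t))
    have : ∀ x ∈ Set.Ioi (0:ℝ), ENNReal.ofReal (u * Real.exp (-(α * x))) *
        (∫⁻ t in Set.Ioi (0:ℝ),
          (if S.X0 ω + S.Ybar (t, ω) ≤ x then ENNReal.ofReal (Real.exp (θ * t)) else 0))
        = ∫⁻ t in Set.Ioi (0:ℝ), ENNReal.ofReal (u * Real.exp (-(α * x))) *
            (if S.X0 ω + S.Ybar (t, ω) ≤ x then ENNReal.ofReal (Real.exp (θ * t)) else 0) := by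
      intro x _
      rw [lintegral_const_mul _ (hmeas_t x)]
    rw [setLIntegral_congr_fun measurableSet_Ioi this]
    refine lintegral_lintegral_swap ?_
    refine Measurable.aemeasurable (Measurable.mul (by fun_prop) ?_)
    exact hkt.comp ((measurable_fst.prodMk measurable_const).prodMk measurable_snd
      : Measurable fun p : ℝ × ℝ => ((p.1, ω), p.2))
  rw [lintegral_congr step2]
  -- step 3 : a.e. ω, evaluate the inner x-integral
  have step3 : ∀ᵐ ω : Ω,
      (∫⁻ t in Set.Ioi (0:ℝ), ∫⁻ x in Set.Ioi (0:ℝ),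
          ENNReal.ofReal (u * Real.exp (-(α * x))) *
          (if S.X0 ω + S.Ybar (t, ω) ≤ x then ENNReal.ofReal (Real.exp (θ * t)) else 0))
      = ∫⁻ t in Set.Ioi (0:ℝ),
          ENNReal.ofReal (u / α * Real.exp (θ * t) *
            Real.exp (-(α * (S.X0 ω + S.Ybar (t, ω))))) := by
    filter_upwards [S.X0_pos, S.Ybar_ae, S.Xp_nonneg] with ω h0 hY hnn
    refine setLIntegral_congr_fun measurableSet_Ioi ?_
    intro t ht
    have hc : 0 < S.X0 ω + S.Ybar (t, ω) := by
      have := hnn t (le_of_lt ht)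
      rw [hY t (le_of_lt ht)]
      linarith
    have hpt : ∀ x : ℝ, ENNReal.ofReal (u * Real.exp (-(α * x))) *
        (if S.X0 ω + S.Ybar (t, ω) ≤ x then ENNReal.ofReal (Real.exp (θ * t)) else 0)
        = (if S.X0 ω + S.Ybar (t, ω) ≤ x
            then ENNReal.ofReal (u * Real.exp (-(α * x))) else 0)
          * ENNReal.ofReal (Real.exp (θ * t)) := by
      intro x
      by_cases h : S.X0 ω + S.Ybar (t, ω) ≤ x <;> simp [h]
    simp_rw [hpt]
    rw [lintegral_mul_const' _ _ ENNReal.ofReal_ne_top, aux_lint_tail hα hu.le hc,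
      ← ENNReal.ofReal_mul (by positivity)]
    congr 1
    ring
  rw [lintegral_congr_ae step3]
  -- swap 3 : ω ↔ t
  have hswap3 : Measurable (fun p : Ω × ℝ =>
      ENNReal.ofReal (u / α * Real.exp (θ * p.2) *
        Real.exp (-(α * (S.X0 p.1 + S.Ybar (p.2, p.1)))))) := by
    refine Measurable.ennreal_ofReal ?_
    refine Measurable.mul (by fun_prop) ?_
    exact Real.measurable_exp.comp (((S.X0_meas.comp measurable_fst).add
      (S.Ybar_meas.comp (measurable_snd.prodMk measurable_fst))).const_mul α).neg
  rw [lintegral_lintegral_swap hswap3.aemeasurable]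
  -- step 4 : per t, compute the ω-integral
  have step4 : ∀ t ∈ Set.Ioi (0:ℝ),
      (∫⁻ ω, ENNReal.ofReal (u / α * Real.exp (θ * t) *
          Real.exp (-(α * (S.X0 ω + S.Ybar (t, ω))))))
      = ENNReal.ofReal (u / α * (S.Phi α / (S.μ * α)) *
          (Real.exp (θ * t) * Real.exp (-(t * S.Phi α)))) := by
    intro t ht
    have h1 : ∀ᵐ ω : Ω, ENNReal.ofReal (u / α * Real.exp (θ * t) *
          Real.exp (-(α * (S.X0 ω + S.Ybar (t, ω)))))
        = ENNReal.ofReal (u / α * Real.exp (θ * t)) *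
            ENNReal.ofReal (Real.exp (-(α * (S.X0 ω + S.Xp t ω)))) := by
      filter_upwards [S.Ybar_ae] with ω hY
      rw [hY t (le_of_lt ht), ENNReal.ofReal_mul (by positivity)]
    rw [lintegral_congr_ae h1, lintegral_const_mul _ (by
      exact (Real.measurable_exp.comp (((S.X0_meas.add (S.Xp_meas t)).const_mul α).neg)).ennreal_ofReal),
      S.lap_X_lint hα (le_of_lt ht), ← ENNReal.ofReal_mul (by positivity)]
    congr 1
    ring
  rw [setLIntegral_congr_fun measurableSet_Ioi step4]
  -- step 5 : final t-integral
  have step5 : ∀ t ∈ Set.Ioi (0:ℝ),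
      ENNReal.ofReal (u / α * (S.Phi α / (S.μ * α)) *
          (Real.exp (θ * t) * Real.exp (-(t * S.Phi α))))
        = ENNReal.ofReal (u / α * (S.Phi α / (S.μ * α))) *
            ENNReal.ofReal (Real.exp (-((S.Phi α - θ) * t))) := by
    intro t _
    rw [← Real.exp_add, ← ENNReal.ofReal_mul (by
      have h1 := S.Phi_nonneg hα.le
      have h2 := S.mu_pos
      positivity)]
    congr 2
    ring
  rw [setLIntegral_congr_fun measurableSet_Ioi step5,
    lintegral_const_mul _ (by fun_prop),
    Measure.restrict_congr_set Ioi_ae_eq_Ici, aux_lint_exp_Ici (by linarith) 0,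
    ← ENNReal.ofReal_mul (by
      have h1 := S.Phi_nonneg hα.le
      have h2 := S.mu_pos
      positivity)]
  congr 1
  norm_num

end LevyCtx


/-- Double transform of the centered first passage time of the delayed subordinator. -/
theorem double_transform_T_centered {Ω : Type} [MeasureSpace Ω] (S : LevyCtx Ω)
    (u θ : ℝ) (hu : 0 < u) (hθl : -(S.μ * u) < θ) (hθu : θ < S.Phi (u + θ / S.μ)) :
    (∫ x in Set.Ioi (0:ℝ), u * Real.exp (-(u * x)) *
        ∫ ω, (Real.exp (θ * (S.T x ω - x / S.μ)) - 1))
      = (θ ^ 2 / (S.μ * u + θ) ^ 2) * (S.μ * u / (S.Phi (u + θ / S.μ) - θ) - 1) := by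
  haveI := S.prob
  have hμ := S.mu_pos
  rcases eq_or_ne θ 0 with rfl | hθ
  · simp
  have hα : 0 < u + θ / S.μ := by
    have h1 : -u < θ / S.μ := by
      rw [lt_div_iff₀ hμ]; linarith
    linarith
  have hΦ0 : 0 ≤ S.Phi (u + θ / S.μ) := S.Phi_nonneg hα.le
  have hΦθpos : 0 < S.Phi (u + θ / S.μ) - θ := by linarith
  -- abbreviations
  have hkt : Measurable (fun q : (ℝ × Ω) × ℝ =>
      if S.X0 q.1.2 + S.Ybar (q.2, q.1.2) ≤ q.1.1
        then ENNReal.ofReal (Real.exp (θ * q.2)) else 0) := by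
    refine Measurable.ite ?_ (by fun_prop) measurable_const
    refine measurableSet_le ?_ (measurable_fst.comp measurable_fst)
    exact ((S.X0_meas.comp (measurable_snd.comp measurable_fst)).add
      (S.Ybar_meas.comp (measurable_snd.prodMk (measurable_snd.comp measurable_fst))))
  have hGmeas : Measurable (fun p : ℝ × Ω => ∫⁻ t in Set.Ioi (0:ℝ),
      (if S.X0 p.2 + S.Ybar (t, p.2) ≤ p.1 then ENNReal.ofReal (Real.exp (θ * t)) else 0)) :=
    Measurable.lintegral_prod_right' (f := fun q : (ℝ × Ω) × ℝ =>
      if S.X0 q.1.2 + S.Ybar (q.2, q.1.2) ≤ q.1.1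
        then ENNReal.ofReal (Real.exp (θ * q.2)) else 0) hkt
  set G : ℝ → Ω → ENNReal := fun x ω => ∫⁻ t in Set.Ioi (0:ℝ),
      (if S.X0 ω + S.Ybar (t, ω) ≤ x then ENNReal.ofReal (Real.exp (θ * t)) else 0) with hGdef
  set H : ℝ → ENNReal := fun x => ∫⁻ ω, G x ω with hHdef
  have hHmeas : Measurable H := by
    rw [hHdef]
    exact Measurable.lintegral_prod_right' (f := fun p : ℝ × Ω => G p.1 p.2) hGmeas
  set c : ℝ := u / (u + θ / S.μ) * (S.Phi (u + θ / S.μ) / (S.μ * (u + θ / S.μ)))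
      * (1 / (S.Phi (u + θ / S.μ) - θ)) with hcdef
  have hc0 : 0 ≤ c := by positivity
  have hJ : (∫⁻ x in Set.Ioi (0:ℝ),
      ENNReal.ofReal (u * Real.exp (-((u + θ / S.μ) * x))) * H x) = ENNReal.ofReal c :=
    S.J_value hu hα hθu
  have hJne : (∫⁻ x in Set.Ioi (0:ℝ),
      ENNReal.ofReal (u * Real.exp (-((u + θ / S.μ) * x))) * H x) ≠ ⊤ := by
    rw [hJ]; exact ENNReal.ofReal_ne_top
  have hWH : Measurable (fun x : ℝ =>
      ENNReal.ofReal (u * Real.exp (-((u + θ / S.μ) * x))) * H x) :=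
    Measurable.mul (by fun_prop) hHmeas
  have haefin : ∀ᵐ x ∂(volume.restrict (Set.Ioi (0:ℝ))), H x ≠ ⊤ := by
    filter_upwards [ae_lt_top hWH hJne] with x hx
    intro htop
    rw [htop, ENNReal.mul_top (by
      simp only [ne_eq, ENNReal.ofReal_eq_zero, not_le]
      positivity)] at hx
    exact absurd hx (lt_irrefl _)
  -- inner Bochner integral identification
  have hinner : ∀ᵐ x ∂(volume.restrict (Set.Ioi (0:ℝ))),
      (∫ ω, (Real.exp (θ * (S.T x ω - x / S.μ)) - 1))
        = Real.exp (-(θ / S.μ * x)) * θ * (H x).toReal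
            + (Real.exp (-(θ / S.μ * x)) - 1) := by
    filter_upwards [haefin, ae_restrict_mem measurableSet_Ioi] with x hHne hx
    have hGae : ∀ᵐ ω : Ω, G x ω
        = ENNReal.ofReal ((Real.exp (θ * S.T x ω) - 1) / θ) :=
      (S.inner_lint hθ).mono fun ω h => h x hx
    have hq0 : ∀ᵐ ω : Ω, 0 ≤ (Real.exp (θ * S.T x ω) - 1) / θ := by
      filter_upwards [S.T_pathwise] with ω hT
      have hT0 : 0 ≤ S.T x ω := (hT x hx).1
      rcases lt_or_gt_of_ne hθ with h | h
      · refine div_nonneg_iff.mpr (Or.inr ⟨?_, h.le⟩)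
        have : Real.exp (θ * S.T x ω) ≤ 1 := Real.exp_le_one_iff.mpr (by nlinarith)
        linarith
      · apply div_nonneg _ h.le
        have : 1 ≤ Real.exp (θ * S.T x ω) := by
          rw [← Real.exp_zero]; apply Real.exp_le_exp.mpr; nlinarith
        linarith
    have hqm : AEStronglyMeasurable
        (fun ω => (Real.exp (θ * S.T x ω) - 1) / θ) ℙ := by
      have hm : Measurable (fun ω => (G x ω).toReal) :=
        (hGmeas.comp (measurable_const.prodMk measurable_id)).ennreal_toReal
      refine hm.aestronglyMeasurable.congr ?_
      filter_upwards [hGae, hq0] with ω h1 h2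
      rw [h1, ENNReal.toReal_ofReal h2]
    have hqlint : (∫⁻ ω, ENNReal.ofReal ((Real.exp (θ * S.T x ω) - 1) / θ)) = H x := by
      rw [hHdef]
      exact (lintegral_congr_ae hGae).symm
    have hqint : Integrable (fun ω => (Real.exp (θ * S.T x ω) - 1) / θ) ℙ := by
      refine ⟨hqm, ?_⟩
      rw [hasFiniteIntegral_iff_ofReal hq0, hqlint]
      exact lt_of_le_of_ne le_top hHne
    have hqval : (∫ ω, (Real.exp (θ * S.T x ω) - 1) / θ) = (H x).toReal := by
      rw [integral_eq_lintegral_of_nonneg_ae hq0 hqm, hqlint]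
    have hfun : (fun ω => Real.exp (θ * (S.T x ω - x / S.μ)) - 1)
        = fun ω => (Real.exp (-(θ / S.μ * x)) * θ) * ((Real.exp (θ * S.T x ω) - 1) / θ)
            + (Real.exp (-(θ / S.μ * x)) - 1) := by
      ext ω
      have h1 : θ * (S.T x ω - x / S.μ) = θ * S.T x ω + -(θ / S.μ * x) := by
        field_simp; ring
      rw [h1, Real.exp_add]
      field_simp
      ring
    rw [hfun, integral_add (hqint.const_mul _) (integrable_const _),
      integral_const_mul, hqval, integral_const]
    simp
  -- outer integral
  have houter : ∀ᵐ x ∂(volume.restrict (Set.Ioi (0:ℝ))),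
      u * Real.exp (-(u * x)) * (∫ ω, (Real.exp (θ * (S.T x ω - x / S.μ)) - 1))
        = θ * (u * Real.exp (-((u + θ / S.μ) * x)) * (H x).toReal)
            + (u * Real.exp (-((u + θ / S.μ) * x)) - u * Real.exp (-(u * x))) := by
    filter_upwards [hinner] with x hx
    rw [hx]
    have hexp : Real.exp (-((u + θ / S.μ) * x))
        = Real.exp (-(u * x)) * Real.exp (-(θ / S.μ * x)) := by
      rw [← Real.exp_add]; congr 1; ring
    rw [hexp]; ring
  rw [integral_congr_ae houter]
  -- integrability of the two pieces
  have hB_meas : Measurable (fun x : ℝ =>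
      u * Real.exp (-((u + θ / S.μ) * x)) * (H x).toReal) :=
    Measurable.mul (by fun_prop) hHmeas.ennreal_toReal
  have hB0 : 0 ≤ᵐ[volume.restrict (Set.Ioi (0:ℝ))]
      (fun x : ℝ => u * Real.exp (-((u + θ / S.μ) * x)) * (H x).toReal) := by
    refine Filter.Eventually.of_forall fun x => ?_
    positivity
  have hBlint : (∫⁻ x in Set.Ioi (0:ℝ), ENNReal.ofReal
      (u * Real.exp (-((u + θ / S.μ) * x)) * (H x).toReal)) = ENNReal.ofReal c := by
    rw [← hJ]
    refine lintegral_congr_ae ?_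
    filter_upwards [haefin] with x hHne
    rw [ENNReal.ofReal_mul (by positivity), ENNReal.ofReal_toReal hHne]
  have hBint : IntegrableOn (fun x : ℝ =>
      u * Real.exp (-((u + θ / S.μ) * x)) * (H x).toReal) (Set.Ioi (0:ℝ)) := by
    refine ⟨hB_meas.aestronglyMeasurable, ?_⟩
    rw [hasFiniteIntegral_iff_ofReal hB0, hBlint]
    exact ENNReal.ofReal_lt_top
  have hBval : (∫ x in Set.Ioi (0:ℝ),
      u * Real.exp (-((u + θ / S.μ) * x)) * (H x).toReal) = c := by
    rw [integral_eq_lintegral_of_nonneg_ae hB0 hB_meas.aestronglyMeasurable, hBlint,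
      ENNReal.toReal_ofReal hc0]
  have hexpint : ∀ b : ℝ, 0 < b → IntegrableOn
      (fun x : ℝ => u * Real.exp (-(b * x))) (Set.Ioi (0:ℝ)) := by
    intro b hb
    have := (exp_neg_integrableOn_Ioi 0 hb).const_mul u
    simp only [neg_mul] at this; exact this
  have hA2int : IntegrableOn (fun x : ℝ =>
      u * Real.exp (-((u + θ / S.μ) * x)) - u * Real.exp (-(u * x))) (Set.Ioi (0:ℝ)) :=
    (hexpint _ hα).sub (hexpint _ hu)
  rw [integral_add (hBint.const_mul θ) hA2int, integral_const_mul, hBval,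
    integral_sub (hexpint _ hα) (hexpint _ hu), integral_const_mul, integral_const_mul,
    aux_integral_exp_Ioi hα 0, aux_integral_exp_Ioi hu 0]
  -- final algebra
  have h1 : S.μ * u + θ = S.μ * (u + θ / S.μ) := by field_simp
  have key : ∀ Φ a : ℝ, 0 < a → S.μ * a = S.μ * u + θ → 0 < Φ - θ →
      θ * (u / a * (Φ / (S.μ * a)) * (1 / (Φ - θ))) + (u * (1 / a) - u * (1 / u))
        = θ ^ 2 / (S.μ * u + θ) ^ 2 * (S.μ * u / (Φ - θ) - 1) := by
    intro Φ a ha hrel hpos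
    have hθeq : θ = S.μ * (a - u) := by linarith
    have hΦa : Φ - S.μ * (a - u) ≠ 0 := by rw [← hθeq]; exact hpos.ne'
    rw [hθeq] at hpos ⊢
    have hua : S.μ * u + S.μ * (a - u) = S.μ * a := by ring
    rw [hua]
    field_simp
    ring
  rw [hcdef]
  simp only [mul_zero, neg_zero, Real.exp_zero]
  exact key _ _ hα h1.symm hΦθpos
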